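/- A nonnegative linear relation M ⊆ K^n × K^n is maximally nonnegative if and only if dim M = n, if and only if M is nonnegative and self-adjoint. -/

import Mathlib

open Matrix
open scoped ComplexOrder

namespace PHDAE
noncomputable section

/-- A linear relation on `ℂ^n`: a subspace of `ℂ^n × ℂ^n`. -/
abbrev Rel (n : ℕ) := Submodule ℂ ((Fin n → ℂ) × (Fin n → ℂ))

/-- The standard inner product `⟨x,y⟩ = ∑ conj (x i) * y i` on `ℂ^n`
(conjugate-linear in the first argument). -/
noncomputable def ip {n : ℕ} (x y : Fin n → ℂ) : ℂ := star x ⬝ᵥ y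

/-- The adjoint relation `M* = {(x,y) | ⟪x,w⟫ = ⟪y,v⟫ for all (v,w) ∈ M}`. -/
noncomputable def adj {n : ℕ} (M : Rel n) : Rel n where
  carrier := {p | ∀ q ∈ M, ip p.1 q.2 = ip p.2 q.1}
  add_mem' := by
    intro a b ha hb q hq
    simp only [Set.mem_setOf_eq, ip, Prod.fst_add, Prod.snd_add, star_add,
      add_dotProduct] at *
    rw [ha q hq, hb q hq]
  zero_mem' := by
    intro q hq; simp [ip]
  smul_mem' := by
    intro c a ha q hq
    simp only [Set.mem_setOf_eq, ip, Prod.smul_fst, Prod.smul_snd, star_smul,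
      smul_dotProduct] at *
    rw [ha q hq]

/-- `−M = {(x, −y) | (x,y) ∈ M}`. -/
def negRel {n : ℕ} (M : Rel n) : Rel n :=
  M.map (LinearMap.prodMap LinearMap.id (-LinearMap.id))

/-- The inverse relation `M⁻¹ = {(y,x) | (x,y) ∈ M}`. -/
def invRel {n : ℕ} (M : Rel n) : Rel n :=
  M.map (LinearEquiv.prodComm ℂ (Fin n → ℂ) (Fin n → ℂ)).toLinearMap

/-- The product (composition) `D ∘ L = {(x,z) | ∃ y, (x,y) ∈ L ∧ (y,z) ∈ D}`. -/
def comp {n : ℕ} (D L : Rel n) : Rel n where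
  carrier := {p | ∃ y, (p.1, y) ∈ L ∧ (y, p.2) ∈ D}
  add_mem' := by
    rintro a b ⟨y, hy1, hy2⟩ ⟨z, hz1, hz2⟩
    exact ⟨y + z, by simpa using L.add_mem hy1 hz1, by simpa using D.add_mem hy2 hz2⟩
  zero_mem' := ⟨0, by exact L.zero_mem, by exact D.zero_mem⟩
  smul_mem' := by
    rintro c a ⟨y, hy1, hy2⟩
    exact ⟨c • y, by simpa using L.smul_mem c hy1, by simpa using D.smul_mem c hy2⟩

/-- The range representation `ran [F; G] = {(Fz, Gz) | z ∈ ℂ^l}`. -/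
def ranRel {n l : ℕ} (F G : Matrix (Fin n) (Fin l) ℂ) : Rel n :=
  LinearMap.range ((Matrix.mulVecLin F).prod (Matrix.mulVecLin G))

/-- The kernel representation `ker [K, L] = {(x,y) | Kx + Ly = 0}`. -/
def kerRel {n : ℕ} (K L : Matrix (Fin n) (Fin n) ℂ) : Rel n :=
  LinearMap.ker ((Matrix.mulVecLin K).coprod (Matrix.mulVecLin L))

/-- The graph `{(x, Ax) | x ∈ ℂ^n}` of a matrix. -/
def graphRel {n : ℕ} (A : Matrix (Fin n) (Fin n) ℂ) : Rel n :=
  ranRel 1 A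

def domRel {n : ℕ} (M : Rel n) : Submodule ℂ (Fin n → ℂ) :=
  M.map (LinearMap.fst ℂ _ _)

def ranSRel {n : ℕ} (M : Rel n) : Submodule ℂ (Fin n → ℂ) :=
  M.map (LinearMap.snd ℂ _ _)

def kerSRel {n : ℕ} (M : Rel n) : Submodule ℂ (Fin n → ℂ) :=
  M.comap (LinearMap.inl ℂ _ _)

def mulRel {n : ℕ} (M : Rel n) : Submodule ℂ (Fin n → ℂ) :=
  M.comap (LinearMap.inr ℂ _ _)

/-- Orthogonal complement in `ℂ^n` with respect to the standard inner product. -/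
noncomputable def orth {n : ℕ} (S : Submodule ℂ (Fin n → ℂ)) : Submodule ℂ (Fin n → ℂ) where
  carrier := {y | ∀ x ∈ S, ip x y = 0}
  add_mem' := by
    intro a b ha hb x hx
    simp only [Set.mem_setOf_eq, ip, dotProduct_add] at *
    rw [ha x hx, hb x hx, add_zero]
  zero_mem' := by intro x hx; simp [ip]
  smul_mem' := by
    intro c a ha x hx
    simp only [Set.mem_setOf_eq, ip, dotProduct_smul] at *
    rw [ha x hx, smul_zero]

def IsSymmetricRel {n : ℕ} (M : Rel n) : Prop := M ≤ adj M
def IsSelfAdjointRel {n : ℕ} (M : Rel n) : Prop := M = adj M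
def IsSkewSymmetricRel {n : ℕ} (M : Rel n) : Prop := M ≤ negRel (adj M)
def IsSkewAdjointRel {n : ℕ} (M : Rel n) : Prop := M = negRel (adj M)

def IsDissipativeRel {n : ℕ} (M : Rel n) : Prop := ∀ p ∈ M, (ip p.1 p.2).re ≤ 0
def IsNonnegRel {n : ℕ} (M : Rel n) : Prop :=
  IsSymmetricRel M ∧ ∀ p ∈ M, 0 ≤ ip p.1 p.2
def IsMaxDissipativeRel {n : ℕ} (M : Rel n) : Prop :=
  IsDissipativeRel M ∧ ∀ M' : Rel n, IsDissipativeRel M' → M ≤ M' → M = M'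
def IsMaxNonnegRel {n : ℕ} (M : Rel n) : Prop :=
  IsNonnegRel M ∧ ∀ M' : Rel n, IsNonnegRel M' → M ≤ M' → M = M'

/-- `det (s E − A)` as a polynomial in `s`. -/
noncomputable def pencilDet {n : ℕ} (E A : Matrix (Fin n) (Fin n) ℂ) : Polynomial ℂ :=
  ((Polynomial.X : Polynomial ℂ) • E.map Polynomial.C - A.map Polynomial.C).det

/-- A square pencil is regular if `det (sE − A)` is not the zero polynomial. -/
def PencilRegular {n : ℕ} (E A : Matrix (Fin n) (Fin n) ℂ) : Prop :=
  pencilDet E A ≠ 0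

/-- The (generic) rank of the pencil `sE − A` over the field of rational functions. -/
noncomputable def pencilRank {n : ℕ} (E A : Matrix (Fin n) (Fin n) ℂ) : ℕ :=
  (((Polynomial.X : Polynomial ℂ) • E.map Polynomial.C - A.map Polynomial.C).map
    (algebraMap (Polynomial ℂ) (RatFunc ℂ))).rank

/-- `μ` is an eigenvalue of `sE − A` if the rank of `μE − A` drops below the generic rank. -/
noncomputable def IsPencilEigenvalue {n : ℕ} (E A : Matrix (Fin n) (Fin n) ℂ) (μ : ℂ) : Prop :=
  (μ • E - A).rank < pencilRank E A

/-- For a regular pencil, the eigenvalue `μ` is semi-simple iff there is no Jordan chain of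
length two, i.e. no `x ≠ 0` with `(μE − A)x = 0` and `Ex ∈ ran (μE − A)`. -/
def SemiSimpleEig {n : ℕ} (E A : Matrix (Fin n) (Fin n) ℂ) (μ : ℂ) : Prop :=
  ¬ ∃ x y : Fin n → ℂ, x ≠ 0 ∧ (μ • E - A).mulVec x = 0 ∧ (μ • E - A).mulVec y = E.mulVec x

/-- For a regular pencil, all Jordan blocks at the eigenvalue `μ` have size at most two iff
there is no Jordan chain of length three. -/
def JordanBlocksAtMostTwo {n : ℕ} (E A : Matrix (Fin n) (Fin n) ℂ) (μ : ℂ) : Prop :=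
  ¬ ∃ x y z : Fin n → ℂ, x ≠ 0 ∧ (μ • E - A).mulVec x = 0 ∧
    (μ • E - A).mulVec y = E.mulVec x ∧ (μ • E - A).mulVec z = E.mulVec y

/-- A fixed matrix norm (Frobenius norm); the resolvent-growth characterizations are
independent of the choice of matrix norm. -/
noncomputable def mnorm {n : ℕ} (M : Matrix (Fin n) (Fin n) ℂ) : ℝ :=
  Real.sqrt (∑ i, ∑ j, ‖M i j‖ ^ 2)

end
end PHDAE

namespace Stmt7Aux
open PHDAE Module Matrix
open scoped InnerProductSpace

noncomputable def eV (n : ℕ) : (Fin n → ℂ) ≃ₗ[ℂ] EuclideanSpace ℂ (Fin n) := (WithLp.linearEquiv 2 ℂ (Fin n → ℂ)).symm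
abbrev EE (n : ℕ) := WithLp 2 (EuclideanSpace ℂ (Fin n) × EuclideanSpace ℂ (Fin n))
noncomputable def eE (n : ℕ) : ((Fin n → ℂ) × (Fin n → ℂ)) ≃ₗ[ℂ] EE n :=
  ((eV n).prodCongr (eV n)).trans (WithLp.linearEquiv 2 ℂ (EuclideanSpace ℂ (Fin n) × EuclideanSpace ℂ (Fin n))).symm

lemma inner_eV {n : ℕ} (x y : Fin n → ℂ) : ⟪eV n x, eV n y⟫_ℂ = ip x y := by
  simp [eV, ip, PiLp.inner_apply, dotProduct, mul_comm]
lemma inner_eE {n : ℕ} (p q : (Fin n → ℂ) × (Fin n → ℂ)) :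
    ⟪eE n p, eE n q⟫_ℂ = ip p.1 q.1 + ip p.2 q.2 := by
  rw [← inner_eV, ← inner_eV]; simp [eE, eV, WithLp.prod_inner_apply]

lemma finrank_EE (n : ℕ) : finrank ℂ (EE n) = 2 * n := by
  rw [(WithLp.linearEquiv 2 ℂ _).finrank_eq]; simp [finrank_prod]; ring

lemma ip_conj {n : ℕ} (x y : Fin n → ℂ) : ip y x = starRingEnd ℂ (ip x y) := by
  rw [ip, Matrix.star_dotProduct]; rfl

lemma ip_add_smul_right {n : ℕ} (x y z : Fin n → ℂ) (c : ℂ) :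
    ip x (y + c • z) = ip x y + c * ip x z := by
  simp [ip, dotProduct_add, dotProduct_smul, smul_eq_mul, mul_comm]

lemma ip_add_smul_left {n : ℕ} (x y z : Fin n → ℂ) (c : ℂ) :
    ip (y + c • z) x = ip y x + (starRingEnd ℂ c) * ip z x := by
  simp [ip, star_add, star_smul, add_dotProduct, smul_dotProduct, smul_eq_mul]

lemma mem_adj {n : ℕ} {M : Rel n} {p : (Fin n → ℂ) × (Fin n → ℂ)} :
    p ∈ adj M ↔ ∀ q ∈ M, ip p.1 q.2 = ip p.2 q.1 := Iff.rfl

lemma adj_antitone {n : ℕ} {M M' : Rel n} (h : M ≤ M') : adj M' ≤ adj M :=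
  fun _ hp q hq => hp q (h hq)

/-- flip with a sign: p ↦ (p.2, -p.1) -/
noncomputable def sigm (n : ℕ) : ((Fin n → ℂ) × (Fin n → ℂ)) →ₗ[ℂ] ((Fin n → ℂ) × (Fin n → ℂ)) :=
  (LinearMap.snd ℂ _ _).prod (-(LinearMap.fst ℂ _ _))

lemma sigm_inj (n : ℕ) : Function.Injective (sigm n) := by
  intro p q h
  simp only [sigm, LinearMap.prod_apply, Function.prod, LinearMap.neg_apply, LinearMap.snd_apply,
    LinearMap.fst_apply, Prod.mk.injEq, neg_inj] at h
  exact Prod.ext h.2 h.1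

lemma map_adj {n : ℕ} (M : Rel n) :
    (adj M).map (eE n).toLinearMap =
      (M.map ((eE n).toLinearMap ∘ₗ sigm n))ᗮ := by
  ext z
  simp only [Submodule.mem_map, Submodule.mem_orthogonal, LinearMap.comp_apply]
  constructor
  · rintro ⟨p, hp, rfl⟩ u ⟨q, hq, rfl⟩
    show ⟪eE n (sigm n q), eE n p⟫_ℂ = 0
    rw [inner_eE]
    have := hp q hq
    simp only [sigm, LinearMap.prod_apply, Function.prod, LinearMap.neg_apply, LinearMap.snd_apply,
      LinearMap.fst_apply]
    have h1 : ip q.2 p.1 = starRingEnd ℂ (ip p.1 q.2) := ip_conj _ _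
    have h2 : ip (-q.1) p.2 = -(starRingEnd ℂ (ip p.2 q.1)) := by
      rw [← ip_conj]; rw [ip, ip, star_neg, neg_dotProduct]
    rw [h1, h2, this]; ring
  · intro h
    refine ⟨(eE n).symm z, ?_, by simp⟩
    intro q hq
    have := h ((eE n).toLinearMap (sigm n q)) ⟨q, hq, rfl⟩
    rw [show ⟪(eE n).toLinearMap ((sigm n) q), z⟫_ℂ =
      ip (sigm n q).1 ((eE n).symm z).1 + ip (sigm n q).2 ((eE n).symm z).2 from by rw [← inner_eE, LinearEquiv.apply_symm_apply] <;> rfl] at this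
    simp only [sigm, LinearMap.prod_apply, Function.prod, LinearMap.neg_apply, LinearMap.snd_apply,
      LinearMap.fst_apply] at this
    have h2 : ip (-q.1) (((eE n).symm z).2) = -(ip q.1 (((eE n).symm z).2)) := by
      rw [ip, ip, star_neg, neg_dotProduct]
    rw [h2] at this
    have heq : ip q.2 (((eE n).symm z).1) = ip q.1 (((eE n).symm z).2) := by linear_combination this
    calc ip ((eE n).symm z).1 q.2 = starRingEnd ℂ (ip q.2 ((eE n).symm z).1) := ip_conj _ _
      _ = starRingEnd ℂ (ip q.1 ((eE n).symm z).2) := by rw [heq]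
      _ = ip ((eE n).symm z).2 q.1 := (ip_conj _ _).symm

lemma finrank_adj {n : ℕ} (M : Rel n) :
    finrank ℂ (adj M) + finrank ℂ M = 2 * n := by
  have h1 : finrank ℂ (adj M) = finrank ℂ ((adj M).map (eE n).toLinearMap) :=
    ((adj M).equivMapOfInjective _ (eE n).injective).finrank_eq
  have hinj : Function.Injective ((eE n).toLinearMap ∘ₗ sigm n) :=
    (eE n).injective.comp (sigm_inj n)
  have h2 : finrank ℂ M = finrank ℂ (M.map ((eE n).toLinearMap ∘ₗ sigm n)) :=
    (M.equivMapOfInjective _ hinj).finrank_eq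
  rw [h1, h2, map_adj, ← finrank_EE n]
  rw [add_comm]
  exact Submodule.finrank_add_finrank_orthogonal _


set_option synthInstance.maxHeartbeats 400000 in
set_option maxHeartbeats 1000000 in
lemma finrank_dom_add_mul {n : ℕ} (M : Rel n) :
    finrank ℂ (M.map (LinearMap.fst ℂ (Fin n → ℂ) (Fin n → ℂ))) +
      finrank ℂ (M.comap (LinearMap.inr ℂ (Fin n → ℂ) (Fin n → ℂ))) = finrank ℂ M := by
  classical
  set f : M →ₗ[ℂ] (Fin n → ℂ) := (LinearMap.fst ℂ _ _).comp M.subtype with hf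
  have hrange : LinearMap.range f = M.map (LinearMap.fst ℂ _ _) := by
    ext x
    simp [f, Submodule.mem_map]
  set g : LinearMap.ker f →ₗ[ℂ] (Fin n → ℂ) :=
    (LinearMap.snd ℂ _ _).comp (M.subtype.comp (LinearMap.ker f).subtype) with hg
  have hginj : Function.Injective g := by
    intro a b hab
    have ha : (a.1.1).1 = 0 := LinearMap.mem_ker.mp a.2
    have hb : (b.1.1).1 = 0 := LinearMap.mem_ker.mp b.2
    have h2 : (a.1.1).2 = (b.1.1).2 := hab
    apply Subtype.ext; apply Subtype.ext
    exact Prod.ext (ha.trans hb.symm) h2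
  have hgrange : LinearMap.range g = M.comap (LinearMap.inr ℂ (Fin n → ℂ) (Fin n → ℂ)) := by
    ext x
    simp only [LinearMap.mem_range, Submodule.mem_comap, LinearMap.inr_apply]
    constructor
    · rintro ⟨⟨⟨p, hp⟩, hker⟩, rfl⟩
      have h1 : p.1 = 0 := hker
      have : p = (0, p.2) := Prod.ext h1 rfl
      simpa [g, ← this] using hp
    · intro hx
      exact ⟨⟨⟨(0, x), hx⟩, rfl⟩, rfl⟩
  have h1 : finrank ℂ (LinearMap.ker f) =
      finrank ℂ (M.comap (LinearMap.inr ℂ (Fin n → ℂ) (Fin n → ℂ))) := by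
    rw [← hgrange]
    exact (LinearMap.finrank_range_of_inj hginj).symm
  rw [← hrange, ← h1]
  exact LinearMap.finrank_range_add_finrank_ker f

lemma mul_le_dom_orth {n : ℕ} (M : Rel n) (hM : IsNonnegRel M) :
    (M.comap (LinearMap.inr ℂ (Fin n → ℂ) (Fin n → ℂ))).map (eV n).toLinearMap ≤
      ((M.map (LinearMap.fst ℂ (Fin n → ℂ) (Fin n → ℂ))).map (eV n).toLinearMap)ᗮ := by
  rintro _ ⟨y, hy, rfl⟩
  rw [Submodule.mem_orthogonal]
  rintro _ ⟨v, ⟨q, hq, rfl⟩, rfl⟩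
  have hsym := hM.1 hq ((0 : Fin n → ℂ), y) hy
  -- hsym : ip q.1 y = ip q.2 0
  have : ip q.1 y = 0 := by
    rw [hsym]; simp [ip]
  exact (inner_eV _ _).trans this

/-- the key one-step extension: a nonnegative relation of dimension < n is not maximal. -/
lemma exists_extension {n : ℕ} (M : Rel n) (hM : IsNonnegRel M)
    (hlt : finrank ℂ M < n) :
    ∃ M' : Rel n, IsNonnegRel M' ∧ M ≤ M' ∧ M ≠ M' := by
  classical
  set D := (M.map (LinearMap.fst ℂ (Fin n → ℂ) (Fin n → ℂ))).map (eV n).toLinearMap with hD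
  set L := (M.comap (LinearMap.inr ℂ (Fin n → ℂ) (Fin n → ℂ))).map (eV n).toLinearMap with hL
  have hle : L ≤ Dᗮ := mul_le_dom_orth M hM
  have hfinD : finrank ℂ D = finrank ℂ (M.map (LinearMap.fst ℂ (Fin n → ℂ) (Fin n → ℂ))) :=
    (((M.map (LinearMap.fst ℂ (Fin n → ℂ) (Fin n → ℂ))).equivMapOfInjective _
      (eV n).injective)).finrank_eq.symm
  have hfinL : finrank ℂ L = finrank ℂ (M.comap (LinearMap.inr ℂ (Fin n → ℂ) (Fin n → ℂ))) :=
    (((M.comap (LinearMap.inr ℂ (Fin n → ℂ) (Fin n → ℂ))).equivMapOfInjective _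
      (eV n).injective)).finrank_eq.symm
  have hDL : finrank ℂ D + finrank ℂ L = finrank ℂ M := by
    rw [hfinD, hfinL]; exact finrank_dom_add_mul M
  have hne : L ≠ Dᗮ := by
    intro h
    have : finrank ℂ D + finrank ℂ Dᗮ = n := by
      rw [Submodule.finrank_add_finrank_orthogonal]
      simp
    rw [← h, hDL] at this
    omega
  obtain ⟨y', hy'D, hy'L⟩ := SetLike.exists_of_lt (lt_of_le_of_ne hle hne)
  set y : Fin n → ℂ := (eV n).symm y' with hy
  have hipvy : ∀ v ∈ M.map (LinearMap.fst ℂ (Fin n → ℂ) (Fin n → ℂ)), ip v y = 0 := by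
    intro v hv
    have h0 := (Submodule.mem_orthogonal _ _).mp hy'D ((eV n).toLinearMap v) ⟨v, hv, rfl⟩
    have h1 : ⟪eV n v, y'⟫_ℂ = 0 := h0
    calc ip v y = ⟪eV n v, eV n y⟫_ℂ := (inner_eV v y).symm
      _ = ⟪eV n v, y'⟫_ℂ := by rw [hy, LinearEquiv.apply_symm_apply]
      _ = 0 := h1
  refine ⟨M ⊔ Submodule.span ℂ {((0 : Fin n → ℂ), y)}, ?_, le_sup_left, ?_⟩
  · -- nonnegativity of the extension
    have hmem : ∀ p ∈ M ⊔ Submodule.span ℂ {((0 : Fin n → ℂ), y)},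
        ∃ m ∈ M, ∃ c : ℂ, p = (m.1, m.2 + c • y) := by
      intro p hp
      obtain ⟨m, hm, s, hs, rfl⟩ := Submodule.mem_sup.mp hp
      obtain ⟨c, rfl⟩ := Submodule.mem_span_singleton.mp hs
      exact ⟨m, hm, c, by simp [Prod.ext_iff]⟩
    have hip1y : ∀ m ∈ M, ip m.1 y = 0 := fun m hm =>
      hipvy m.1 ⟨m, hm, rfl⟩
    have hipy1 : ∀ m ∈ M, ip y m.1 = 0 := fun m hm => by
      rw [ip_conj, hip1y m hm]; simp
    constructor
    · intro p hp q hq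
      obtain ⟨m, hm, c, rfl⟩ := hmem p hp
      obtain ⟨m', hm', c', rfl⟩ := hmem q hq
      show ip m.1 (m'.2 + c' • y) = ip (m.2 + c • y) m'.1
      rw [ip_add_smul_right, ip_add_smul_left, hip1y m hm, hipy1 m' hm', hM.1 hm m' hm']
      ring
    · intro p hp
      obtain ⟨m, hm, c, rfl⟩ := hmem p hp
      show (0:ℂ) ≤ ip m.1 (m.2 + c • y)
      rw [ip_add_smul_right, hip1y m hm, mul_zero, add_zero]
      exact hM.2 m hm
  · intro h
    have : ((0 : Fin n → ℂ), y) ∈ M := by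
      rw [h]
      exact Submodule.mem_sup_right (Submodule.mem_span_singleton_self _)
    apply hy'L
    exact ⟨y, this, by simp [hy]⟩

end Stmt7Aux

open PHDAE in
/-- a nonnegative relation is maximally nonnegative iff `dim M = n`,
iff it is nonnegative and self-adjoint. -/
theorem stmt_7 {n : ℕ} (M : Rel n) (hM : IsNonnegRel M) :
    (IsMaxNonnegRel M ↔ Module.finrank ℂ M = n) ∧
    (IsMaxNonnegRel M ↔ IsNonnegRel M ∧ IsSelfAdjointRel M) := by
  have hsum := Stmt7Aux.finrank_adj M
  have hfin : Module.finrank ℂ M ≤ n := by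
    have h : Module.finrank ℂ M ≤ Module.finrank ℂ (adj M) := Submodule.finrank_mono hM.1
    omega
  have hsa_of_rank : Module.finrank ℂ M = n → IsSelfAdjointRel M := by
    intro hr
    exact Submodule.eq_of_le_of_finrank_eq hM.1 (by omega)
  have hrank_of_sa : IsSelfAdjointRel M → Module.finrank ℂ M = n := by
    intro hSA
    have : Module.finrank ℂ (adj M) = Module.finrank ℂ M := by rw [← hSA]
    omega
  have hmax_of_rank : Module.finrank ℂ M = n → IsMaxNonnegRel M := by
    intro hr
    have hadj := hsa_of_rank hr
    refine ⟨hM, fun M' hM' hle => le_antisymm hle ?_⟩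
    exact hM'.1.trans ((Stmt7Aux.adj_antitone hle).trans_eq hadj.symm)
  have hrank_of_max : IsMaxNonnegRel M → Module.finrank ℂ M = n := by
    intro hmax
    by_contra hne
    obtain ⟨M', hM', hle, hne'⟩ := Stmt7Aux.exists_extension M hM (by omega)
    exact hne' (hmax.2 M' hM' hle)
  refine ⟨⟨hrank_of_max, hmax_of_rank⟩, ⟨fun h => ⟨hM, hsa_of_rank (hrank_of_max h)⟩,
    fun h => hmax_of_rank (hrank_of_sa h.2)⟩⟩
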